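/- Fix a positive integer s and let S be a Poisson random variable with mean s. Then S is right-skewed with mode s: P(S = s−i) ≤ P(S = s+i−1) for all i ∈ {1,...,s}. -/

import Mathlib

open ProbabilityTheory
open scoped NNReal

lemma key_fact (s : ℕ) (hs : 0 < s) :
    ∀ i, 1 ≤ i → i ≤ s → Nat.factorial (s + i - 1) ≤ s ^ (2 * i - 1) * Nat.factorial (s - i) := by
  intro i
  induction i with
  | zero => intro h; omega
  | succ n ih =>
    intro _ hle
    rcases Nat.eq_or_lt_of_le (Nat.one_le_iff_ne_zero.mpr (Nat.succ_ne_zero n)) with h1 | h1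
    · -- n = 0, i = 1
      have hn : n = 0 := by omega
      subst hn
      simp only [Nat.add_sub_cancel]
      have : s ^ (2 * 1 - 1) = s := by norm_num
      rw [this, Nat.mul_factorial_pred hs.ne']
    · -- n ≥ 1
      have hn1 : 1 ≤ n := by omega
      have hns : n ≤ s := by omega
      have IH := ih hn1 hns
      have e1 : s + (n + 1) - 1 = s + n := by omega
      have hpos : 0 < s + n := by omega
      have e2 : Nat.factorial (s + n) = (s + n) * Nat.factorial (s + n - 1) :=
        (Nat.mul_factorial_pred hpos.ne').symm
      have hsn : 0 < s - n := by omega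
      have e3 : Nat.factorial (s - n) = (s - n) * Nat.factorial (s - n - 1) :=
        (Nat.mul_factorial_pred hsn.ne').symm
      have e4 : s - (n + 1) = s - n - 1 := by omega
      rw [e1, e2, e4]
      calc (s + n) * Nat.factorial (s + n - 1)
          ≤ (s + n) * (s ^ (2 * n - 1) * Nat.factorial (s - n)) :=
            Nat.mul_le_mul_left _ IH
        _ = ((s + n) * (s - n)) * (s ^ (2 * n - 1) * Nat.factorial (s - n - 1)) := by
            rw [e3]; ring
        _ ≤ (s * s) * (s ^ (2 * n - 1) * Nat.factorial (s - n - 1)) := by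
            apply Nat.mul_le_mul_right
            have ha : s = (s - n) + n := by omega
            nlinarith [ha]
        _ = s ^ (2 * (n + 1) - 1) * Nat.factorial (s - n - 1) := by
            have : 2 * (n + 1) - 1 = (2 * n - 1) + 2 := by omega
            rw [this, pow_add]; ring

theorem stmt7 (s : ℕ) (hs : 0 < s) :
    ∀ i ∈ Finset.Icc 1 s,
      poissonPMFReal (s : ℝ≥0) (s - i) ≤ poissonPMFReal (s : ℝ≥0) (s + i - 1) := by
  intro i hi
  rw [Finset.mem_Icc] at hi
  obtain ⟨h1, h2⟩ := hi
  unfold poissonPMFReal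
  have hnorm : ((s : ℝ≥0) : ℝ) = (s : ℝ) := by norm_num
  rw [hnorm]
  have hsp : (0:ℝ) < s := by exact_mod_cast hs
  have hf1 : (0:ℝ) < (Nat.factorial (s - i) : ℝ) := by exact_mod_cast Nat.factorial_pos _
  have hf2 : (0:ℝ) < (Nat.factorial (s + i - 1) : ℝ) := by exact_mod_cast Nat.factorial_pos _
  have hexp : (0:ℝ) < Real.exp (-(s:ℝ)) := Real.exp_pos _
  rw [div_le_div_iff₀ hf1 hf2]
  have key := key_fact s hs i h1 h2
  have hpow : (s:ℝ) ^ (s + i - 1) = (s:ℝ) ^ (s - i) * (s:ℝ) ^ (2 * i - 1) := by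
    rw [← pow_add]
    congr 1
    omega
  have hkeyR : ((Nat.factorial (s + i - 1) : ℝ)) ≤ (s:ℝ) ^ (2 * i - 1) * (Nat.factorial (s - i) : ℝ) := by
    exact_mod_cast key
  calc Real.exp (-(s:ℝ)) * (s:ℝ) ^ (s - i) * (Nat.factorial (s + i - 1) : ℝ)
      ≤ Real.exp (-(s:ℝ)) * (s:ℝ) ^ (s - i) * ((s:ℝ) ^ (2 * i - 1) * (Nat.factorial (s - i) : ℝ)) := by
        apply mul_le_mul_of_nonneg_left hkeyR
        positivity
    _ = Real.exp (-(s:ℝ)) * (s:ℝ) ^ (s + i - 1) * (Nat.factorial (s - i) : ℝ) := by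
        rw [hpow]; ring
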